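/- Let q be a prime power, m ≥ 1 a positive integer, and r an integer with 0 ≤ r ≤ (q−3)/2. Then the weight set of the q-ary Reed–Muller code RM_q(m(q−1)−r−1, m) equals {0} ∪ {r+2, r+3, …, q^m}. -/

import Mathlib

open MvPolynomial Finset

/-- Hamming weight: the number of nonzero coordinates. -/
noncomputable def hwt {ι F : Type*} [Zero F] (c : ι → F) : ℕ := Set.ncard {i | c i ≠ 0}

/-- The `q`-ary Reed–Muller code of order `s` in `m` variables over the field `F` of
cardinality `q`: all evaluation vectors, on the points of `F^m`, of `m`-variate
polynomials of total degree at most `s`. -/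
def RMcode (F : Type*) [CommSemiring F] (s m : ℕ) : Set ((Fin m → F) → F) :=
  {c | ∃ f : MvPolynomial (Fin m) F, f.totalDegree ≤ s ∧ ∀ P, MvPolynomial.eval P f = c P}

section Aux
variable {K : Type*} [Field K] [Fintype K]

lemma aux_sum_eval_zero {n : ℕ} (f : MvPolynomial (Fin n) K)
    (hd : f.totalDegree < n * (Fintype.card K - 1)) :
    ∑ x : Fin n → K, MvPolynomial.eval x f = 0 := by
  classical
  have h1 : ∀ x : Fin n → K, eval x f = ∑ d ∈ f.support, f.coeff d * ∏ i, x i ^ d i :=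
    fun x => eval_eq' x f
  calc ∑ x : Fin n → K, eval x f
      = ∑ x : Fin n → K, ∑ d ∈ f.support, f.coeff d * ∏ i, x i ^ d i := by simp_rw [h1]
    _ = ∑ d ∈ f.support, ∑ x : Fin n → K, f.coeff d * ∏ i, x i ^ d i := Finset.sum_comm
    _ = 0 := ?_
  apply Finset.sum_eq_zero
  intro d hd'
  rw [← Finset.mul_sum]
  have hx : ∑ x : Fin n → K, ∏ i, x i ^ d i = ∏ i, ∑ a : K, a ^ d i := by
    rw [Finset.prod_univ_sum, Fintype.piFinset_univ]
  obtain ⟨i0, hi0⟩ : ∃ i, d i < Fintype.card K - 1 := by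
    by_contra hcon
    push_neg at hcon
    have hb : n * (Fintype.card K - 1) ≤ ∑ i, d i := by
      calc n * (Fintype.card K - 1) = ∑ _i : Fin n, (Fintype.card K - 1) := by
            simp [Finset.sum_const, mul_comm]
        _ ≤ ∑ i, d i := Finset.sum_le_sum fun i _ => hcon i
    have hle : ∑ i, d i ≤ f.totalDegree := by
      have h2 := MvPolynomial.le_totalDegree hd'
      rwa [Finsupp.sum_fintype _ _ (fun i => rfl)] at h2
    omega
  rw [hx, Finset.prod_eq_zero (Finset.mem_univ i0)
    (FiniteField.sum_pow_lt_card_sub_one (K := K) (d i0) hi0), mul_zero]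

lemma aux_delta_degree {n : ℕ} (g : MvPolynomial (Fin n) K) (P : Fin n → K)
    (h0 : ∀ x, x ≠ P → MvPolynomial.eval x g = 0) (hP : MvPolynomial.eval P g ≠ 0) :
    n * (Fintype.card K - 1) ≤ g.totalDegree := by
  by_contra h
  push_neg at h
  have hs := aux_sum_eval_zero g h
  rw [Finset.sum_eq_single P (fun x _ hx => h0 x hx) (by simp)] at hs
  exact hP hs

end Aux
open MvPolynomial Finset

section Aux
variable {K : Type*} [Field K] [Fintype K]

lemma aux_min_weight {n r : ℕ} (f : MvPolynomial (Fin n) K)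
    (hd : f.totalDegree + (r + 1) ≤ n * (Fintype.card K - 1))
    (P : Fin n → K) (hP : MvPolynomial.eval P f ≠ 0) :
    r + 2 ≤ Set.ncard {x : Fin n → K | MvPolynomial.eval x f ≠ 0} := by
  classical
  by_contra hcon
  push_neg at hcon
  set N : Finset (Fin n → K) := univ.filter (fun x => MvPolynomial.eval x f ≠ 0) with hNdef
  have hncard : Set.ncard {x : Fin n → K | MvPolynomial.eval x f ≠ 0} = N.card := by
    rw [Set.ncard_eq_toFinset_card']
    congr 1
    simp [hNdef, Set.toFinset_setOf]
  rw [hncard] at hcon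
  have hPN : P ∈ N := by simp [hNdef, hP]
  -- index choice
  have hidx : ∀ Q : {x // x ∈ N.erase P}, ∃ i, Q.1 i ≠ P i := by
    intro Q
    exact Function.ne_iff.mp (Finset.ne_of_mem_erase Q.2)
  choose idx hidxs using hidx
  set g : MvPolynomial (Fin n) K :=
    f * ∏ Q ∈ (N.erase P).attach, (X (idx Q) - C (Q.1 (idx Q))) with hgdef
  have hevalg : ∀ x : Fin n → K,
      MvPolynomial.eval x g
        = MvPolynomial.eval x f * ∏ Q ∈ (N.erase P).attach, (x (idx Q) - Q.1 (idx Q)) := by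
    intro x
    simp [hgdef, map_prod]
  have h0 : ∀ x, x ≠ P → MvPolynomial.eval x g = 0 := by
    intro x hx
    by_cases hxN : x ∈ N.erase P
    · rw [hevalg]
      rw [Finset.prod_eq_zero (Finset.mem_attach _ ⟨x, hxN⟩) (by simp), mul_zero]
    · have hxf : MvPolynomial.eval x f = 0 := by
        by_contra hne
        exact hxN (Finset.mem_erase.mpr ⟨hx, by simp [hNdef, hne]⟩)
      rw [hevalg, hxf, zero_mul]
  have hgP : MvPolynomial.eval P g ≠ 0 := by
    rw [hevalg]
    refine mul_ne_zero hP (Finset.prod_ne_zero_iff.mpr fun Q _ => ?_)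
    exact sub_ne_zero.mpr (Ne.symm (hidxs Q))
  have hdg : g.totalDegree ≤ f.totalDegree + r := by
    calc g.totalDegree ≤ f.totalDegree
          + (∏ Q ∈ (N.erase P).attach, (X (idx Q) - C (Q.1 (idx Q)))).totalDegree :=
        totalDegree_mul _ _
      _ ≤ f.totalDegree + ∑ Q ∈ (N.erase P).attach,
            (X (idx Q) - C (Q.1 (idx Q)) : MvPolynomial (Fin n) K).totalDegree := by
        gcongr
        exact totalDegree_finset_prod _ _
      _ ≤ f.totalDegree + ∑ _Q ∈ (N.erase P).attach, 1 := by
        gcongr with Q hQ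
        calc (X (idx Q) - C (Q.1 (idx Q)) : MvPolynomial (Fin n) K).totalDegree
            = (X (idx Q) + C (-(Q.1 (idx Q))) : MvPolynomial (Fin n) K).totalDegree := by
              rw [sub_eq_add_neg, C_neg]
          _ ≤ max (X (idx Q) : MvPolynomial (Fin n) K).totalDegree
                (C (-(Q.1 (idx Q))) : MvPolynomial (Fin n) K).totalDegree := totalDegree_add _ _
          _ ≤ 1 := by simp [totalDegree_X]
      _ ≤ f.totalDegree + r := by
        simp only [Finset.sum_const, smul_eq_mul, mul_one, Finset.card_attach]
        have : (N.erase P).card ≤ r := by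
          have := Finset.card_erase_of_mem hPN
          omega
        omega
  have := aux_delta_degree g P h0 hgP
  omega

lemma aux_delta_scalar [DecidableEq K] (b c : K) :
    (1 : K) - (c - b) ^ (Fintype.card K - 1) = if c = b then 1 else 0 := by
  classical
  rcases eq_or_ne c b with h | h
  · have h2 : 1 < Fintype.card K := Fintype.one_lt_card
    simp [h, zero_pow (by omega : Fintype.card K - 1 ≠ 0)]
  · rw [FiniteField.pow_card_sub_one_eq_one _ (sub_ne_zero.mpr h)]
    simp [h]

end Aux

lemma aux_exists_weights (q r : ℕ) (hq : 2 * r + 3 ≤ q) :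
    ∀ N w, r + 2 ≤ w → w ≤ N * q → ∃ t : Fin N → ℕ,
      (∀ i, t i = 0 ∨ (r + 2 ≤ t i ∧ t i ≤ q)) ∧ ∑ i, t i = w := by
  intro N
  induction N with
  | zero => intro w h1 h2; omega
  | succ N ih =>
    intro w h1 h2
    have hmul : (N + 1) * q = N * q + q := by ring
    by_cases hw : w ≤ q
    · refine ⟨Fin.cons w 0, ?_, ?_⟩
      · intro i
        refine Fin.cases ?_ ?_ i
        · right; simpa using ⟨h1, hw⟩
        · intro j; left; simp
      · rw [Fin.sum_cons]; simp
    · push_neg at hw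
      have hN : 1 ≤ N := by
        rcases Nat.eq_zero_or_pos N with h | h
        · subst h; omega
        · exact h
      have hq2 : q ≤ N * q := Nat.le_mul_of_pos_left q hN
      set s := min q (w - (r + 2)) with hs
      have h1' : r + 2 ≤ w - s := by omega
      have h2' : w - s ≤ N * q := by omega
      obtain ⟨t, ht1, ht2⟩ := ih (w - s) h1' h2'
      refine ⟨Fin.cons s t, ?_, ?_⟩
      · intro i
        refine Fin.cases ?_ ?_ i
        · right
          constructor
          · simp only [Fin.cons_zero]; omega
          · simp only [Fin.cons_zero]; omega
        · intro j; simpa using ht1 j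
      · rw [Fin.sum_cons, ht2]; omega
section TD
variable {R : Type*} [CommRing R] [Nontrivial R]

lemma aux_td_Xsub {n : ℕ} (i : Fin n) (a : R) :
    (X i - C a : MvPolynomial (Fin n) R).totalDegree ≤ 1 := by
  calc (X i - C a : MvPolynomial (Fin n) R).totalDegree
      = (X i + C (-a) : MvPolynomial (Fin n) R).totalDegree := by rw [sub_eq_add_neg, C_neg]
    _ ≤ max (X i : MvPolynomial (Fin n) R).totalDegree
        (C (-a) : MvPolynomial (Fin n) R).totalDegree := totalDegree_add _ _
    _ ≤ 1 := by simp [totalDegree_X]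

lemma aux_td_one_sub_pow {n : ℕ} (i : Fin n) (a : R) (d : ℕ) :
    ((1 : MvPolynomial (Fin n) R) - (X i - C a) ^ d).totalDegree ≤ d := by
  calc ((1 : MvPolynomial (Fin n) R) - (X i - C a) ^ d).totalDegree
      = ((1 : MvPolynomial (Fin n) R) + (-((X i - C a) ^ d))).totalDegree := by
        rw [sub_eq_add_neg]
    _ ≤ max (1 : MvPolynomial (Fin n) R).totalDegree (-((X i - C a) ^ d)).totalDegree :=
        totalDegree_add _ _
    _ ≤ d := by
        apply max_le
        · simp [totalDegree_one]
        · rw [totalDegree_neg]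
          calc ((X i - C a : MvPolynomial (Fin n) R) ^ d).totalDegree
              ≤ d * (X i - C a : MvPolynomial (Fin n) R).totalDegree := totalDegree_pow _ _
            _ ≤ d * 1 := by gcongr; exact aux_td_Xsub i a
            _ = d := mul_one d

end TD


/-- For `m ≥ 1` and `0 ≤ r ≤ (q-3)/2` (i.e. `2r + 3 ≤ q`), the weight set of
`RM_q(m(q-1)-r-1, m)` equals `{0} ∪ {r+2, r+3, …, q^m}`. -/
theorem stmt12 {F : Type*} [Field F] [Fintype F]
    (q : ℕ) (hq : q = Fintype.card F)
    (m r : ℕ) (hm : 1 ≤ m) (hr : 2 * r + 3 ≤ q) :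
    {w : ℕ | ∃ c ∈ RMcode F (m * (q - 1) - r - 1) m, hwt c = w}
      = {0} ∪ Set.Icc (r + 2) (q ^ m) := by
  classical
  subst hq
  obtain ⟨k, rfl⟩ := Nat.exists_eq_succ_of_ne_zero (by omega : m ≠ 0)
  have hcardfun : Fintype.card (Fin (k + 1) → F) = Fintype.card F ^ (k + 1) := by
    rw [Fintype.card_fun, Fintype.card_fin]
  have hsm : (k + 1) * (Fintype.card F - 1) = k * (Fintype.card F - 1) + (Fintype.card F - 1) := by
    ring
  have hsm' : Nat.succ k * (Fintype.card F - 1)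
      = k * (Fintype.card F - 1) + (Fintype.card F - 1) := by
    rw [Nat.succ_mul]
  have hcard3 : 3 ≤ Fintype.card F := by omega
  ext w
  simp only [Set.mem_setOf_eq, Set.mem_union, Set.mem_singleton_iff, Set.mem_Icc]
  constructor
  · rintro ⟨c, ⟨f, hdf, hev⟩, rfl⟩
    by_cases hzero : ∀ x, c x = 0
    · left
      have hem : {x : Fin (k + 1) → F | c x ≠ 0} = ∅ := by ext x; simp [hzero]
      simp [hwt, hem]
    · right
      push_neg at hzero
      obtain ⟨P, hP⟩ := hzero
      have hsetEq : {x : Fin (k + 1) → F | c x ≠ 0}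
          = {x : Fin (k + 1) → F | MvPolynomial.eval x f ≠ 0} := by
        ext x; simp [hev]
      constructor
      · have hdeg2 : f.totalDegree + (r + 1) ≤ (k + 1) * (Fintype.card F - 1) := by omega
        have := aux_min_weight f hdeg2 P (by rw [hev]; exact hP)
        rw [hwt, hsetEq]
        exact this
      · have h1 : {x : Fin (k + 1) → F | c x ≠ 0}.ncard
            ≤ (Set.univ : Set (Fin (k + 1) → F)).ncard :=
          Set.ncard_le_ncard (Set.subset_univ _) Set.finite_univ
        rw [Set.ncard_univ, Nat.card_eq_fintype_card, hcardfun] at h1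
        simpa [hwt] using h1
  · rintro (rfl | ⟨hw1, hw2⟩)
    · refine ⟨0, ⟨0, by simp, by simp⟩, ?_⟩
      simp [hwt]
    · -- construction
      have hcardk : Fintype.card (Fin k → F) = Fintype.card F ^ k := by
        rw [Fintype.card_fun, Fintype.card_fin]
      have hwN : w ≤ Fintype.card F ^ k * Fintype.card F := by rw [← pow_succ]; exact hw2
      obtain ⟨t0, ht01, ht02⟩ :=
        aux_exists_weights (Fintype.card F) r hr (Fintype.card F ^ k) w hw1 hwN
      set e := Fintype.equivFinOfCardEq hcardk with he
      set t : (Fin k → F) → ℕ := fun y => t0 (e y) with ht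
      have htprop : ∀ y, t y = 0 ∨ (r + 2 ≤ t y ∧ t y ≤ Fintype.card F) := fun y => ht01 (e y)
      have htsum : ∑ y : Fin k → F, t y = w := by
        rw [← ht02]; exact Fintype.sum_equiv e _ _ (fun y => rfl)
      have hTex : ∀ y : Fin k → F, ∃ T : Finset F, T ⊆ univ ∧ T.card = Fintype.card F - t y := by
        intro y
        exact Finset.exists_subset_card_eq (s := univ) (by rw [Finset.card_univ]; omega)
      choose T _hTuniv hTcard using hTex
      set g : (Fin k → F) → MvPolynomial (Fin (k + 1)) F :=
        fun y => ∏ a ∈ T y, (X 0 - C a) with hg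
      set δ : (Fin k → F) → MvPolynomial (Fin (k + 1)) F :=
        fun y => ∏ i : Fin k, (1 - (X i.succ - C (y i)) ^ (Fintype.card F - 1)) with hδ
      set f : MvPolynomial (Fin (k + 1)) F :=
        ∑ y ∈ univ.filter (fun y => t y ≠ 0), g y * δ y with hf
      set c : (Fin (k + 1) → F) → F := fun x => MvPolynomial.eval x f with hc
      have hδeval : ∀ (x : Fin (k + 1) → F) (y : Fin k → F),
          MvPolynomial.eval x (δ y) = if Fin.tail x = y then 1 else 0 := by
        intro x y
        rw [hδ]
        simp only [map_prod, map_sub, map_one, map_pow, eval_X, eval_C]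
        have hfac : ∀ i : Fin k, (1 : F) - (x i.succ - y i) ^ (Fintype.card F - 1)
            = if x i.succ = y i then 1 else 0 := fun i => aux_delta_scalar (y i) (x i.succ)
        have hiff : (∀ i ∈ (univ : Finset (Fin k)), x i.succ = y i) ↔ Fin.tail x = y := by
          constructor
          · intro h; funext i; exact h i (Finset.mem_univ i)
          · intro h i _; rw [← h]; rfl
        rw [Finset.prod_congr rfl (fun i _ => hfac i), Finset.prod_boole]
        simp only [hiff]
      have hceval : ∀ x : Fin (k + 1) → F,
          c x = if t (Fin.tail x) ≠ 0 then ∏ a ∈ T (Fin.tail x), (x 0 - a) else 0 := by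
        intro x
        show MvPolynomial.eval x f = _
        rw [hf, map_sum]
        have hterm : ∀ y ∈ univ.filter (fun y => t y ≠ 0),
            MvPolynomial.eval x (g y * δ y)
              = if Fin.tail x = y then ∏ a ∈ T y, (x 0 - a) else 0 := by
          intro y _
          rw [map_mul, hδeval]
          have hgeval : MvPolynomial.eval x (g y) = ∏ a ∈ T y, (x 0 - a) := by
            rw [hg]; simp [map_prod]
          rw [hgeval, mul_ite, mul_one, mul_zero]
        rw [Finset.sum_congr rfl hterm, Finset.sum_ite_eq]
        simp only [Finset.mem_filter, Finset.mem_univ, true_and]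
      refine ⟨c, ⟨f, ?_, fun P => rfl⟩, ?_⟩
      · -- degree bound
        rw [hf]
        apply le_trans (totalDegree_finset_sum _ _)
        apply Finset.sup_le
        intro y hy
        rw [Finset.mem_filter] at hy
        have hty := (htprop y).resolve_left hy.2
        have hgdeg : (g y).totalDegree ≤ Fintype.card F - (r + 2) := by
          rw [hg]
          calc (∏ a ∈ T y, (X 0 - C a : MvPolynomial (Fin (k + 1)) F)).totalDegree
              ≤ ∑ a ∈ T y, (X 0 - C a : MvPolynomial (Fin (k + 1)) F).totalDegree :=
              totalDegree_finset_prod _ _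
            _ ≤ ∑ _a ∈ T y, 1 := Finset.sum_le_sum (fun a _ => aux_td_Xsub 0 a)
            _ = (T y).card := by simp
            _ = Fintype.card F - t y := hTcard y
            _ ≤ Fintype.card F - (r + 2) := by omega
        have hδdeg : (δ y).totalDegree ≤ k * (Fintype.card F - 1) := by
          rw [hδ]
          calc (∏ i : Fin k, ((1 : MvPolynomial (Fin (k + 1)) F)
                - (X i.succ - C (y i)) ^ (Fintype.card F - 1))).totalDegree
              ≤ ∑ i : Fin k, ((1 : MvPolynomial (Fin (k + 1)) F)
                - (X i.succ - C (y i)) ^ (Fintype.card F - 1)).totalDegree :=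
              totalDegree_finset_prod _ _
            _ ≤ ∑ _i : Fin k, (Fintype.card F - 1) := by
              apply Finset.sum_le_sum
              intro i _
              exact aux_td_one_sub_pow i.succ (y i) (Fintype.card F - 1)
            _ = k * (Fintype.card F - 1) := by
              simp [Finset.sum_const, mul_comm]
        calc (g y * δ y).totalDegree ≤ (g y).totalDegree + (δ y).totalDegree :=
            totalDegree_mul _ _
          _ ≤ (Fintype.card F - (r + 2)) + k * (Fintype.card F - 1) := by omega
          _ ≤ (k + 1) * (Fintype.card F - 1) - r - 1 := by omega
      · -- weight = w
        have h1 : hwt c = (univ.filter (fun x : Fin (k + 1) → F => c x ≠ 0)).card := by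
          rw [hwt, Set.ncard_eq_toFinset_card']
          congr 1
          simp [Set.toFinset_setOf]
        rw [h1, Finset.card_eq_sum_card_fiberwise
          (f := fun x : Fin (k + 1) → F => Fin.tail x) (t := univ) (fun x _ => Finset.mem_univ _)]
        have hfiber : ∀ y : Fin k → F,
            ((univ.filter fun x : Fin (k + 1) → F => c x ≠ 0).filter
              fun x => Fin.tail x = y).card = t y := by
          intro y
          by_cases hty : t y = 0
          · rw [hty, Finset.card_eq_zero, Finset.filter_eq_empty_iff]
            intro x hx
            rw [Finset.mem_filter] at hx
            intro htx
            apply hx.2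
            rw [hceval, htx, hty]
            simp
          · have hinj : Function.Injective (fun a : F => Fin.cons a y : F → Fin (k + 1) → F) :=
              fun a b h => by simpa using congrFun h 0
            have himg : ((univ.filter fun x : Fin (k + 1) → F => c x ≠ 0).filter
                fun x => Fin.tail x = y) = (univ \ T y).image (fun a => Fin.cons a y) := by
              ext x
              simp only [Finset.mem_filter, Finset.mem_univ, true_and, Finset.mem_image,
                Finset.mem_sdiff]
              constructor
              · rintro ⟨hcx, htx⟩
                refine ⟨x 0, ?_, ?_⟩
                · intro hmem
                  apply hcx
                  rw [hceval, htx, Finset.prod_eq_zero hmem (sub_self _), ite_self]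
                · rw [← htx, Fin.cons_self_tail]
              · rintro ⟨a, haT, rfl⟩
                refine ⟨?_, Fin.tail_cons _ _⟩
                rw [hceval, Fin.tail_cons, if_pos hty]
                simp only [Fin.cons_zero]
                exact Finset.prod_ne_zero_iff.mpr
                  fun b hb => sub_ne_zero.mpr (fun hab => haT (hab ▸ hb))
            rw [himg, Finset.card_image_of_injective _ hinj,
              Finset.card_sdiff_of_subset (Finset.subset_univ _), Finset.card_univ, hTcard]
            have := (htprop y).resolve_left hty
            omega
        rw [Finset.sum_congr rfl (fun y _ => hfiber y)]
        exact htsum
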